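/- If [x_1, ..., x_n] and [y_1, ..., y_n] are two lists of real numbers that are not permutations of each other but satisfy ∑ x_i^j = ∑ y_i^j for j = 1, ..., m, then n ≥ m + 1. -/

import Mathlib

open MvPolynomial Finset Polynomial

lemma ofFn_multiset_eq {n : ℕ} (x : Fin n → ℝ) :
    (List.ofFn x : Multiset ℝ) = Finset.univ.val.map x := by
  simp [List.ofFn_eq_map, Fin.univ_def, Finset.val]

lemma perm_of_multiset_eq {n : ℕ} {x y : Fin n → ℝ}
    (h : Finset.univ.val.map x = Finset.univ.val.map y) :
    ∃ σ : Equiv.Perm (Fin n), ∀ i, x (σ i) = y i := by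
  have hp : (List.ofFn x).Perm (List.ofFn y) := by
    rw [← Multiset.coe_eq_coe, ofFn_multiset_eq, ofFn_multiset_eq]; exact h
  have hs : x ∘ Tuple.sort x = y ∘ Tuple.sort y := by
    apply List.ofFn_injective
    refine List.Perm.eq_of_sortedLE (Tuple.monotone_sort x).sortedLE_ofFn
      (Tuple.monotone_sort y).sortedLE_ofFn ?_
    exact (((Tuple.sort x).ofFn_comp_perm x).trans hp).trans
      ((Tuple.sort y).ofFn_comp_perm y).symm
  refine ⟨(Tuple.sort y).symm.trans (Tuple.sort x), fun i => ?_⟩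
  have := congrFun hs ((Tuple.sort y).symm i)
  simpa using this

lemma aeval_psum {n : ℕ} (x : Fin n → ℝ) (j : ℕ) :
    aeval x (psum (Fin n) ℝ j) = ∑ i, x i ^ j := by
  simp [psum]

lemma esymm_congr {n : ℕ} (x y : Fin n → ℝ)
    (hpow : ∀ j ∈ Finset.Icc 1 n, (∑ i, x i ^ j) = ∑ i, y i ^ j) :
    ∀ k ≤ n, aeval x (esymm (Fin n) ℝ k) = aeval y (esymm (Fin n) ℝ k) := by
  intro k
  induction k using Nat.strong_induction_on with
  | _ k ih =>
    intro hk
    rcases Nat.eq_zero_or_pos k with h0 | h0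
    · subst h0; simp [esymm_zero]
    have hx := congrArg (MvPolynomial.aeval (R := ℝ) x) (mul_esymm_eq_sum (Fin n) ℝ k)
    have hy := congrArg (MvPolynomial.aeval (R := ℝ) y) (mul_esymm_eq_sum (Fin n) ℝ k)
    simp only [map_mul, map_pow, map_neg, map_one, map_natCast, map_sum] at hx hy
    have hsum : ∑ a ∈ Finset.HasAntidiagonal.antidiagonal k with a.1 < k,
          aeval x ((-1 : MvPolynomial (Fin n) ℝ) ^ a.1 * esymm (Fin n) ℝ a.1 *
            psum (Fin n) ℝ a.2) =
        ∑ a ∈ Finset.HasAntidiagonal.antidiagonal k with a.1 < k,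
          aeval y ((-1 : MvPolynomial (Fin n) ℝ) ^ a.1 * esymm (Fin n) ℝ a.1 *
            psum (Fin n) ℝ a.2) := by
      refine Finset.sum_congr rfl fun a ha => ?_
      simp only [Finset.mem_filter, Finset.mem_antidiagonal] at ha
      have h1 : a.1 < k := ha.2
      have h2 : a.2 ∈ Finset.Icc 1 n := by
        have h0 := Finset.HasAntidiagonal.mem_antidiagonal.mp ha.1
        refine Finset.mem_Icc.mpr ⟨?_, ?_⟩ <;> omega
      simp only [map_mul, map_pow, map_neg, map_one, aeval_psum, hpow a.2 h2,
        ih a.1 h1 (by omega)]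
    have hk' : (k : ℝ) ≠ 0 := Nat.cast_ne_zero.mpr (by omega)
    have : (k : ℝ) * aeval x (esymm (Fin n) ℝ k) = (k : ℝ) * aeval y (esymm (Fin n) ℝ k) := by
      rw [hx, hy]
      congr 1
      simpa using hsum
    exact mul_left_cancel₀ hk' this

theorem pte_size_lower_bound (n m : ℕ) (x y : Fin n → ℝ)
    (hne : ¬ ∃ σ : Equiv.Perm (Fin n), ∀ i, x (σ i) = y i)
    (hpow : ∀ j ∈ Finset.Icc 1 m, (∑ i, x i ^ j) = ∑ i, y i ^ j) :
    n ≥ m + 1 := by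
  by_contra h
  have hnm : n ≤ m := by omega
  apply hne
  apply perm_of_multiset_eq
  have hpow' : ∀ j ∈ Finset.Icc 1 n, (∑ i, x i ^ j) = ∑ i, y i ^ j := fun j hj =>
    hpow j (Finset.Icc_subset_Icc_right hnm hj)
  have hes := esymm_congr x y hpow'
  -- multiset esymm equality
  set sx : Multiset ℝ := Finset.univ.val.map x with hsx
  set sy : Multiset ℝ := Finset.univ.val.map y with hsy
  have hcx : Multiset.card sx = n := by simp [hsx]
  have hcy : Multiset.card sy = n := by simp [hsy]
  have hes' : ∀ k ≤ n, sx.esymm k = sy.esymm k := by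
    intro k hk
    have := hes k hk
    rwa [aeval_esymm_eq_multiset_esymm, aeval_esymm_eq_multiset_esymm] at this
  have hpoly : (sx.map fun t => Polynomial.X - Polynomial.C t).prod = (sy.map fun t => Polynomial.X - Polynomial.C t).prod := by
    ext k
    by_cases hk : k ≤ n
    · rw [Multiset.prod_X_sub_C_coeff sx (hcx ▸ hk), Multiset.prod_X_sub_C_coeff sy (hcy ▸ hk),
        hcx, hcy, hes' (n - k) (by omega)]
    · have d1 : ((sx.map fun t => Polynomial.X - Polynomial.C t).prod).natDegree = n := by
        rw [Polynomial.natDegree_multiset_prod_X_sub_C_eq_card, hcx]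
      have d2 : ((sy.map fun t => Polynomial.X - Polynomial.C t).prod).natDegree = n := by
        rw [Polynomial.natDegree_multiset_prod_X_sub_C_eq_card, hcy]
      rw [Polynomial.coeff_eq_zero_of_natDegree_lt (by omega),
        Polynomial.coeff_eq_zero_of_natDegree_lt (by omega)]
  have := congrArg Polynomial.roots hpoly
  rwa [Polynomial.roots_multiset_prod_X_sub_C, Polynomial.roots_multiset_prod_X_sub_C] at this
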